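/- arXiv:2203.16713 — 3 statements merged into one kernel-verified Lean document; each statement's English description precedes it below -/
import Mathlib

section
/- If F is a family of finite sets with universe U, and F' is the family obtained by replacing each S in F with S' = {u⁺, u⁻ : u ∈ S} over the doubled universe U' = {u⁺, u⁻ : u ∈ U}, then there exists a subfamily of F of size at most c covering U if and only if there exists a subfamily of F' of size at most c whose union misses at most one element of U'. -/
/-- Set Cover on (U, F) with budget c is equivalent to Almost Set Cover
on the doubled instance (U × {0,1}, {S × {0,1} : S ∈ F}) with budget c. -/
theorem almost_set_cover_reduction {α : Type*} [DecidableEq α]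
    (U : Finset α) (F : Finset (Finset α)) (hU : F.sup id = U) (c : ℕ) :
    (∃ F' ⊆ F, F'.card ≤ c ∧ F'.sup id = U) ↔
    (∃ K ⊆ F.image (fun S => S ×ˢ (Finset.univ : Finset (Fin 2))), K.card ≤ c ∧
      ((U ×ˢ (Finset.univ : Finset (Fin 2))) \ K.sup id).card ≤ 1) := by
  have key : ∀ G : Finset (Finset α),
      (G.image (fun S => S ×ˢ (Finset.univ : Finset (Fin 2)))).sup id
        = (G.sup id) ×ˢ (Finset.univ : Finset (Fin 2)) := by
    intro G
    ext ⟨a, b⟩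
    simp [Finset.mem_sup, Finset.mem_product]
  constructor
  · rintro ⟨F', hF'F, hcard, hsup⟩
    refine ⟨F'.image _, Finset.image_subset_image hF'F,
      le_trans Finset.card_image_le hcard, ?_⟩
    rw [key, hsup, Finset.sdiff_self]; simp
  · rintro ⟨K, hKF, hcard, hmiss⟩
    set f : Finset α → Finset (α × Fin 2) :=
      fun S => S ×ˢ (Finset.univ : Finset (Fin 2)) with hf
    have hinj : Function.Injective f := by
      intro s t hst
      ext a
      have := Finset.ext_iff.mp hst (a, 0)
      simpa [hf, Finset.mem_product] using this
    set F' := F.filter (fun S => f S ∈ K) with hF'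
    have hKeq : K = F'.image f := by
      apply Finset.Subset.antisymm
      · intro T hT
        obtain ⟨S, hS, rfl⟩ := Finset.mem_image.mp (hKF hT)
        exact Finset.mem_image.mpr ⟨S, Finset.mem_filter.mpr ⟨hS, hT⟩, rfl⟩
      · intro T hT
        obtain ⟨S, hS, rfl⟩ := Finset.mem_image.mp hT
        exact (Finset.mem_filter.mp hS).2
    refine ⟨F', Finset.filter_subset _ _, ?_, ?_⟩
    · rw [hKeq, Finset.card_image_of_injective _ hinj] at hcard; exact hcard
    · have hV : F'.sup id ⊆ U := by
        have h2 : F'.sup id ≤ F.sup id := Finset.sup_mono (F.filter_subset (fun S => f S ∈ K))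
        rwa [hU] at h2
      have hUV : U ⊆ F'.sup id := by
        by_contra h
        obtain ⟨u, huU, huV⟩ := Finset.not_subset.mp h
        have h0 : (u, (0 : Fin 2)) ∈ (U ×ˢ (Finset.univ : Finset (Fin 2))) \ K.sup id := by
          rw [hKeq, key]; simp [Finset.mem_product, huU, huV]
        have h1 : (u, (1 : Fin 2)) ∈ (U ×ˢ (Finset.univ : Finset (Fin 2))) \ K.sup id := by
          rw [hKeq, key]; simp [Finset.mem_product, huU, huV]
        have : ({(u, (0 : Fin 2)), (u, 1)} : Finset (α × Fin 2)).card ≤ 1 :=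
          le_trans (Finset.card_le_card (by
            intro x hx; simp only [Finset.mem_insert, Finset.mem_singleton] at hx
            rcases hx with rfl | rfl <;> assumption)) hmiss
        simp at this
      exact Finset.Subset.antisymm hV hUV
end

section
/- In a game of Wordle with alphabet Σ of size σ, the strategy of always guessing a feasible word guarantees a win within σ guesses: more precisely, if for each position i we track the set S(i) of symbols appearing at position i among currently feasible words, then after each feasible guess, each S(i) either becomes a singleton or strictly decreases in size. -/
/-- after a feasible guess `p` against secret `w`, the set of symbols
appearing at position `i` among words still feasible either becomes the singleton
`{p i}` (green position) or is contained in `S(i) \ {p i}` (non-green position). -/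
theorem wordle_position_sets_shrink {k : ℕ} {A : Type*} [Fintype A] [DecidableEq A]
    (D : Finset (Fin k → A)) (p w : Fin k → A) (hp : p ∈ D) (hw : w ∈ D) (i : Fin k) :
    ((p i = w i →
        (D.filter (fun p' => ∀ j, (p j = w j → p' j = p j) ∧ (p j ≠ w j → p' j ≠ p j))).image
          (fun w' => w' i) = {p i}) ∧
     (p i ≠ w i →
        (D.filter (fun p' => ∀ j, (p j = w j → p' j = p j) ∧ (p j ≠ w j → p' j ≠ p j))).image
          (fun w' => w' i) ⊆ (D.image (fun w' => w' i)) \ {p i})) := by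
  have hwf : w ∈ D.filter
      (fun p' => ∀ j, (p j = w j → p' j = p j) ∧ (p j ≠ w j → p' j ≠ p j)) := by
    refine Finset.mem_filter.mpr ⟨hw, fun j => ⟨fun h => h.symm, fun h hne => h hne.symm⟩⟩
  constructor
  · intro hg
    apply Finset.Subset.antisymm
    · intro x hx
      obtain ⟨p', hp', rfl⟩ := Finset.mem_image.mp hx
      have := (Finset.mem_filter.mp hp').2 i
      simp [this.1 hg]
    · intro x hx
      rw [Finset.mem_singleton] at hx
      subst hx
      exact Finset.mem_image.mpr ⟨w, hwf, hg.symm⟩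
  · intro hng x hx
    obtain ⟨p', hp', rfl⟩ := Finset.mem_image.mp hx
    have h := Finset.mem_filter.mp hp'
    have := (h.2 i).2 hng
    simp only [Finset.mem_sdiff, Finset.mem_singleton]
    exact ⟨Finset.mem_image.mpr ⟨p', h.1, rfl⟩, fun he => this he⟩
end

section
/- Let G be a 4-regular graph and D_G its associated Wordle dictionary. Any winning guessing strategy for D_G requires at least γ(G) guesses: for any sequence of γ(G) − 1 guesses, the set of first symbols of the guesses fails to dominate some vertex v, and the word w'_v = (v,v,v,v,v) remains feasible and unguessed when all feedback is gray. Hence W(D_G) ≥ γ(G). -/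
/-- History of feedbacks after `n` guesses made by strategy `strat` against secret `w`. -/
def hist {α M : Type*} (strat : List M → α) (f : α → α → M) (w : α) : ℕ → List M
  | 0 => []
  | n + 1 => hist strat f w n ++ [f (strat (hist strat f w n)) w]

/-- The guesser can guarantee to discover any secret word of `D` within `ℓ` guesses. -/
def WinsWithin {α M : Type*} (D : Finset α) (f : α → α → M) (ℓ : ℕ) : Prop :=
  ∃ strat : List M → α,
    (∀ w ∈ D, ∀ t, t < ℓ → strat (hist strat f w t) ∈ D) ∧
    ∀ w ∈ D, ∃ t < ℓ, strat (hist strat f w t) = w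

/-- Minimum number of guesses sufficient for a guaranteed win. -/
noncomputable def WNum {α M : Type*} (D : Finset α) (f : α → α → M) : ℕ :=
  sInf {ℓ | WinsWithin D f ℓ}

/-- Wordle feedback: green positions, and for each letter the number of yellow marks
(the standard marking rule assigns, per letter, `min` of its non-green multiplicities
in the guess and in the secret). -/
def feedback {V : Type*} [DecidableEq V] (p w : Fin 5 → V) : (Fin 5 → Bool) × (V → ℕ) :=
  ⟨fun i => decide (p i = w i),
   fun a => min ((Finset.univ.filter (fun i => p i = a ∧ p i ≠ w i)).card)
                ((Finset.univ.filter (fun i => w i = a ∧ p i ≠ w i)).card)⟩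

/-- The word `w_v = (v, n₁, n₂, n₃, n₄)`. -/
def wv {V : Type*} (nbr : V → Fin 4 → V) (v : V) : Fin 5 → V :=
  fun i => Fin.cases v (fun j => nbr v j) i

/-- The constant word `w'_v = (v,v,v,v,v)`. -/
def wv' {V : Type*} (v : V) : Fin 5 → V := fun _ => v

/-- The dictionary `D_G` built from the graph. -/
def DG {V : Type*} [Fintype V] [DecidableEq V] (nbr : V → Fin 4 → V) :
    Finset (Fin 5 → V) :=
  Finset.univ.image (wv nbr) ∪ Finset.univ.image wv'

/-- `S` is a dominating set of `G`. -/
def Dominating {V : Type*} (G : SimpleGraph V) (S : Finset V) : Prop :=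
  ∀ u, ∃ v ∈ S, u = v ∨ G.Adj v u

/-- The domination number `γ(G)`. -/
noncomputable def gamma {V : Type*} (G : SimpleGraph V) : ℕ :=
  sInf {n | ∃ S : Finset V, S.card ≤ n ∧ Dominating G S}



section Aux

variable {V : Type*} [DecidableEq V]

lemma hist_length {α M : Type*} (strat : List M → α) (f : α → α → M) (w : α) (t : ℕ) :
    (hist strat f w t).length = t := by
  induction t with
  | zero => rfl
  | succ n ih => simp [hist, ih]

lemma hist_gray {α M : Type*} (strat : List M → α) (f : α → α → M) (w : α) (g : M) (t : ℕ)
    (h : ∀ s, s < t → f (strat (List.replicate s g)) w = g) :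
    hist strat f w t = List.replicate t g := by
  induction t with
  | zero => rfl
  | succ n ih =>
    rw [hist, ih (fun s hs => h s (hs.trans (Nat.lt_succ_self n))),
      h n (Nat.lt_succ_self n), List.replicate_succ']

lemma feedback_gray (p w : Fin 5 → V) (h : ∀ i j, p i ≠ w j) :
    feedback p w = (fun _ => false, fun _ => (0 : ℕ)) := by
  unfold feedback
  refine Prod.ext ?_ ?_
  · funext i
    simp only [decide_eq_false_iff_not]
    exact h i i
  · funext a
    simp only
    by_cases h1 : ∃ i, p i = a
    · obtain ⟨i, hi⟩ := h1
      have : (Finset.univ.filter (fun j => w j = a ∧ p j ≠ w j)).card = 0 := by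
        rw [Finset.card_eq_zero, Finset.filter_eq_empty_iff]
        intro j _
        rintro ⟨hj, -⟩
        exact h i j (hi.trans hj.symm)
      omega
    · have : (Finset.univ.filter (fun i => p i = a ∧ p i ≠ w i)).card = 0 := by
        rw [Finset.card_eq_zero, Finset.filter_eq_empty_iff]
        intro j _
        rintro ⟨hj, -⟩
        exact h1 ⟨j, hj⟩
      omega

lemma wv'_mem_DG [Fintype V] (nbr : V → Fin 4 → V) (v : V) : wv' v ∈ DG nbr := by
  simp only [DG, Finset.mem_union, Finset.mem_image]
  exact Or.inr ⟨v, Finset.mem_univ v, rfl⟩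

lemma symbols_of_DG [Fintype V] (G : SimpleGraph V) [DecidableRel G.Adj] (nbr : V → Fin 4 → V)
    (hnbr : ∀ v, Finset.univ.image (nbr v) = G.neighborFinset v)
    {p : Fin 5 → V} (hp : p ∈ DG nbr) (i : Fin 5) :
    p i = p 0 ∨ G.Adj (p 0) (p i) := by
  simp only [DG, Finset.mem_union, Finset.mem_image] at hp
  rcases hp with ⟨u, -, rfl⟩ | ⟨u, -, rfl⟩
  · have h0 : wv nbr u 0 = u := rfl
    rw [h0]
    refine Fin.cases ?_ ?_ i
    · exact Or.inl rfl
    · intro j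
      right
      have : nbr u j ∈ G.neighborFinset u := by
        rw [← hnbr u]
        exact Finset.mem_image_of_mem _ (Finset.mem_univ j)
      simpa [wv] using (SimpleGraph.mem_neighborFinset ..).mp this
  · exact Or.inl rfl

end Aux

/-- any sequence of `γ(G) - 1` guesses from `D_G` leaves some vertex `v`
undominated by the first symbols of the guesses, with `w'_v` unguessed (and feasible
when all feedback is gray); hence `γ(G) ≤ W(D_G)`. -/
theorem wordle_lower_bound_domination {V : Type*} [Fintype V] [DecidableEq V] [Nonempty V]
    (G : SimpleGraph V) [DecidableRel G.Adj] (nbr : V → Fin 4 → V)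
    (h4 : ∀ v, (G.neighborFinset v).card = 4)
    (hnbr : ∀ v, Finset.univ.image (nbr v) = G.neighborFinset v) :
    (∀ L : List (Fin 5 → V), (∀ p ∈ L, p ∈ DG nbr) → L.length = gamma G - 1 →
      ∃ v, wv' v ∉ L ∧ ∀ p ∈ L, ¬(p 0 = v ∨ G.Adj (p 0) v)) ∧
    gamma G ≤ WNum (DG nbr) feedback := by
  classical
  -- gamma is positive and well-defined
  have hdomuniv : Dominating G Finset.univ := fun u => ⟨u, Finset.mem_univ u, Or.inl rfl⟩
  have hsetne : (Fintype.card V) ∈ {n | ∃ S : Finset V, S.card ≤ n ∧ Dominating G S} :=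
    ⟨Finset.univ, by simp, hdomuniv⟩
  have hγpos : 1 ≤ gamma G := by
    by_contra hc
    push_neg at hc
    have h0 : gamma G = 0 := by omega
    have hmem : gamma G ∈ {n | ∃ S : Finset V, S.card ≤ n ∧ Dominating G S} :=
      Nat.sInf_mem ⟨_, hsetne⟩
    rw [h0] at hmem
    obtain ⟨S, hS0, hSdom⟩ := hmem
    obtain ⟨v, hv, -⟩ := hSdom (Classical.arbitrary V)
    rw [Finset.card_eq_zero.mp (Nat.le_zero.mp hS0)] at hv
    exact absurd hv (Finset.notMem_empty v)
  -- Part 1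
  have part1 : ∀ L : List (Fin 5 → V), (∀ p ∈ L, p ∈ DG nbr) → L.length = gamma G - 1 →
      ∃ v, wv' v ∉ L ∧ ∀ p ∈ L, ¬(p 0 = v ∨ G.Adj (p 0) v) := by
    intro L hL hlen
    by_contra hcon
    push_neg at hcon
    have hdom : Dominating G (L.map (fun p => p 0)).toFinset := by
      intro u
      by_cases hu : wv' u ∈ L
      · refine ⟨u, ?_, Or.inl rfl⟩
        rw [List.mem_toFinset, List.mem_map]
        exact ⟨wv' u, hu, rfl⟩
      · obtain ⟨p, hp, hpu⟩ := hcon u hu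
        refine ⟨p 0, ?_, ?_⟩
        · rw [List.mem_toFinset, List.mem_map]
          exact ⟨p, hp, rfl⟩
        · rcases hpu with h | h
          · exact Or.inl h.symm
          · exact Or.inr h
    have hcard : (L.map (fun p => p 0)).toFinset.card ≤ gamma G - 1 := by
      calc (L.map (fun p => p 0)).toFinset.card ≤ (L.map (fun p => p 0)).length :=
            List.toFinset_card_le _
        _ = L.length := List.length_map _
        _ = gamma G - 1 := hlen
    have : gamma G ≤ gamma G - 1 :=
      Nat.sInf_le (Set.mem_setOf_eq ▸ ⟨(L.map (fun p => p 0)).toFinset, hcard, hdom⟩)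
    clear hcon hdom hcard hL hlen
    omega
  refine ⟨part1, ?_⟩
  -- nonemptiness of the winning set: enumerate the dictionary
  set D := DG nbr with hD
  have hwinne : WinsWithin D feedback D.card := by
    refine ⟨fun h => D.toList.getD h.length (wv' (Classical.arbitrary V)), ?_, ?_⟩
    · intro w hw t ht
      beta_reduce
      rw [hist_length]
      have ht' : t < D.toList.length := by rwa [Finset.length_toList]
      rw [List.getD_eq_getElem _ _ ht']
      exact Finset.mem_toList.mp (List.getElem_mem _)
    · intro w hw
      have hw' : w ∈ D.toList := Finset.mem_toList.mpr hw
      obtain ⟨t, ht, hget⟩ := List.mem_iff_getElem.mp hw'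
      refine ⟨t, by rwa [Finset.length_toList] at ht, ?_⟩
      beta_reduce
      rw [hist_length, List.getD_eq_getElem _ _ ht]
      exact hget
  -- every winning ℓ satisfies gamma G ≤ ℓ
  refine le_csInf ⟨_, hwinne⟩ ?_
  rintro ℓ ⟨strat, hmem, hwin⟩
  by_contra hc
  push_neg at hc
  have hℓ : ℓ ≤ gamma G - 1 := by omega
  set gray : (Fin 5 → Bool) × (V → ℕ) := (fun _ => false, fun _ => 0) with hgraydef
  set g : ℕ → (Fin 5 → V) := fun s => strat (List.replicate s gray) with hgdef
  -- auxiliary: given that all guesses before s are in D and s ≤ ℓ, find an undominated v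
  have findv : ∀ s, s ≤ ℓ → (∀ a, a < s → g a ∈ D) →
      ∃ v, wv' v ∉ (List.range s).map g ∧
        (∀ a, a < s → feedback (g a) (wv' v) = gray) := by
    intro s hs hall
    set L : List (Fin 5 → V) :=
      (List.range s).map g ++ List.replicate (gamma G - 1 - s) (wv' (Classical.arbitrary V))
      with hLdef
    have hLmem : ∀ p ∈ L, p ∈ DG nbr := by
      intro p hp
      rw [hLdef, List.mem_append] at hp
      rcases hp with hp | hp
      · rw [List.mem_map] at hp
        obtain ⟨a, ha, rfl⟩ := hp
        rw [List.mem_range] at ha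
        exact hall a ha
      · rw [List.eq_of_mem_replicate hp]
        exact wv'_mem_DG nbr _
    have hLlen : L.length = gamma G - 1 := by
      rw [hLdef]
      simp only [List.length_append, List.length_map, List.length_range,
        List.length_replicate]
      omega
    obtain ⟨v, hv1, hv2⟩ := part1 L hLmem hLlen
    refine ⟨v, fun hmem' => hv1 (by rw [hLdef, List.mem_append]; exact Or.inl hmem'), ?_⟩
    intro a ha
    have hgaL : g a ∈ L := by
      rw [hLdef, List.mem_append]
      exact Or.inl (List.mem_map.mpr ⟨a, List.mem_range.mpr ha, rfl⟩)
    have hnd := hv2 (g a) hgaL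
    apply feedback_gray
    intro i j heq
    have hsym := symbols_of_DG G nbr hnbr (hall a ha) i
    have hv : g a i = v := by simpa [wv'] using heq
    rcases hsym with h | h
    · exact hnd (Or.inl (h.symm.trans hv))
    · rw [hv] at h
      exact hnd (Or.inr h)
  -- all gray-history guesses lie in D
  have key : ∀ s, s ≤ ℓ → ∀ a, a < s → g a ∈ D := by
    intro s
    induction s with
    | zero => intro _ a ha; omega
    | succ n ih =>
      intro hn a ha
      rcases Nat.lt_succ_iff_lt_or_eq.mp ha with h' | h'
      · exact ih (by omega) a h'
      · subst h'
        obtain ⟨v, -, hgray⟩ := findv a (by omega) (ih (by omega))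
        have hh : hist strat feedback (wv' v) a = List.replicate a gray :=
          hist_gray _ _ _ _ _ hgray
        have := hmem (wv' v) (wv'_mem_DG nbr v) a (by omega)
        rwa [hh] at this
  -- final contradiction
  obtain ⟨v, hv1, hgray⟩ := findv ℓ le_rfl (key ℓ le_rfl)
  obtain ⟨t, ht, hts⟩ := hwin (wv' v) (wv'_mem_DG nbr v)
  have hh : hist strat feedback (wv' v) t = List.replicate t gray :=
    hist_gray _ _ _ _ _ (fun s hs => hgray s (hs.trans ht))
  rw [hh] at hts
  exact hv1 (List.mem_map.mpr ⟨t, List.mem_range.mpr ht, hts⟩)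
end
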